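/- Let a, b be real numbers with b > a > 0. Then the function p ↦ J_p(a,b) is strictly decreasing on (0,∞) and the function p ↦ log J_p(a,b) is convex on (0,∞). -/

import Mathlib

noncomputable section

open Real

/-- Logarithmic mean: `L(x,y) = (x - y)/(log x - log y)` for `x ≠ y`, `L(x,x) = x`. -/
def logMean (x y : ℝ) : ℝ := if x = y then x else (x - y) / (Real.log x - Real.log y)

/-- Identric mean: `I(x,y) = (1/e) * (x^x / y^y)^(1/(x-y))` for `x ≠ y`, `I(x,x) = x`. -/
def identricMean (x y : ℝ) : ℝ :=
  if x = y then x else (1 / Real.exp 1) * (x ^ x / y ^ y) ^ (1 / (x - y))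

/-- Power mean of order `t`: `M_t(a,b) = ((a^t + b^t)/2)^(1/t)` for `t ≠ 0`, `M_0(a,b) = √(ab)`. -/
def powerMean (t a b : ℝ) : ℝ :=
  if t = 0 then Real.sqrt (a * b) else ((a ^ t + b ^ t) / 2) ^ (1 / t)

/-- Lehmer mean of order `p`: `L_p(a,b) = (a^p + b^p)/(a^(p-1) + b^(p-1))`. -/
def lehmerMean (p a b : ℝ) : ℝ := (a ^ p + b ^ p) / (a ^ (p - 1) + b ^ (p - 1))

/-- Weighted power mean: `M_p(ω,a,b) = ((a^p + ω b^p)/(1 + ω))^(1/p)`. -/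
def wPowerMean (p ω a b : ℝ) : ℝ := ((a ^ p + ω * b ^ p) / (1 + ω)) ^ (1 / p)

/-- Modified Alzer mean: `J_p(a,b) = ((p+1)/p) * (a^(p+1) - b^(p+1))/(a^p - b^p)`. -/
def alzerMean (p a b : ℝ) : ℝ :=
  ((p + 1) / p) * ((a ^ (p + 1) - b ^ (p + 1)) / (a ^ p - b ^ p))

namespace AlzerAux

/-- `h(p) = log p + log (b^p - a^p)`, i.e. `log (p (b^p - a^p))`. -/
def ah (a b p : ℝ) : ℝ := Real.log p + Real.log (b ^ p - a ^ p)

/-- the derivative of `ah`. -/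
def ah1 (a b p : ℝ) : ℝ :=
  p⁻¹ + (b ^ p * Real.log b - a ^ p * Real.log a) / (b ^ p - a ^ p)

/-- the derivative of `ah1`. -/
def ah2 (a b p : ℝ) : ℝ :=
  -(p ^ 2)⁻¹ - a ^ p * b ^ p * (Real.log b - Real.log a) ^ 2 / (b ^ p - a ^ p) ^ 2

lemma add_inv_mono {x y : ℝ} (hx : 1 ≤ x) (hxy : x ≤ y) : x + x⁻¹ ≤ y + y⁻¹ := by
  have hx0 : (0:ℝ) < x := lt_of_lt_of_le one_pos hx
  have hy0 : (0:ℝ) < y := lt_of_lt_of_le hx0 hxy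
  have key : y + y⁻¹ - (x + x⁻¹) = (y - x) * (x * y - 1) / (x * y) := by
    field_simp
    ring
  have h1 : 0 ≤ (y - x) * (x * y - 1) / (x * y) := by
    apply div_nonneg _ (by positivity)
    apply mul_nonneg (by linarith)
    nlinarith
  linarith

variable {a b : ℝ}

lemma rlt (ha : 0 < a) (hab : a < b) {p : ℝ} (hp : 0 < p) : a ^ p < b ^ p :=
  Real.rpow_lt_rpow ha.le hab hp

lemma hasDerivAt_ah (ha : 0 < a) (hab : a < b) {p : ℝ} (hp : 0 < p) :
    HasDerivAt (ah a b) (ah1 a b p) p := by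
  have hb : 0 < b := ha.trans hab
  have hvne : b ^ p - a ^ p ≠ 0 := sub_ne_zero.2 (rlt ha hab hp).ne'
  have h1 : HasDerivAt (fun x : ℝ => b ^ x - a ^ x)
      (b ^ p * Real.log b - a ^ p * Real.log a) p :=
    ((Real.hasStrictDerivAt_const_rpow hb p).hasDerivAt).sub
      ((Real.hasStrictDerivAt_const_rpow ha p).hasDerivAt)
  exact (Real.hasDerivAt_log hp.ne').add (h1.log hvne)

lemma hasDerivAt_ah1 (ha : 0 < a) (hab : a < b) {p : ℝ} (hp : 0 < p) :
    HasDerivAt (ah1 a b) (ah2 a b p) p := by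
  have hb : 0 < b := ha.trans hab
  have hvne : b ^ p - a ^ p ≠ 0 := sub_ne_zero.2 (rlt ha hab hp).ne'
  have hu : HasDerivAt (fun x : ℝ => b ^ x * Real.log b - a ^ x * Real.log a)
      (b ^ p * Real.log b * Real.log b - a ^ p * Real.log a * Real.log a) p :=
    (((Real.hasStrictDerivAt_const_rpow hb p).hasDerivAt).mul_const (Real.log b)).sub
      (((Real.hasStrictDerivAt_const_rpow ha p).hasDerivAt).mul_const (Real.log a))
  have hv : HasDerivAt (fun x : ℝ => b ^ x - a ^ x)
      (b ^ p * Real.log b - a ^ p * Real.log a) p :=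
    ((Real.hasStrictDerivAt_const_rpow hb p).hasDerivAt).sub
      ((Real.hasStrictDerivAt_const_rpow ha p).hasDerivAt)
  have hq := hu.div hv hvne
  have hinv : HasDerivAt (fun x : ℝ => x⁻¹) (-(p ^ 2)⁻¹) p := hasDerivAt_inv hp.ne'
  have H := hinv.add hq
  have heq : -(p ^ 2)⁻¹ +
      ((b ^ p * Real.log b * Real.log b - a ^ p * Real.log a * Real.log a) * (b ^ p - a ^ p) -
        (b ^ p * Real.log b - a ^ p * Real.log a) * (b ^ p * Real.log b - a ^ p * Real.log a)) /
        (b ^ p - a ^ p) ^ 2 = ah2 a b p := by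
    unfold ah2
    have hnum : (b ^ p * Real.log b * Real.log b - a ^ p * Real.log a * Real.log a) *
        (b ^ p - a ^ p) -
        (b ^ p * Real.log b - a ^ p * Real.log a) * (b ^ p * Real.log b - a ^ p * Real.log a)
        = -(a ^ p * b ^ p * (Real.log b - Real.log a) ^ 2) := by ring
    rw [hnum]
    ring
  rw [heq] at H
  exact H

lemma ah2_neg (ha : 0 < a) (hab : a < b) {p : ℝ} (hp : 0 < p) : ah2 a b p < 0 := by
  have hb : 0 < b := ha.trans hab
  have hvne : (0:ℝ) < b ^ p - a ^ p := sub_pos.2 (rlt ha hab hp)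
  have h1 : (0:ℝ) < (p ^ 2)⁻¹ := by positivity
  have h2 : (0:ℝ) ≤ a ^ p * b ^ p * (Real.log b - Real.log a) ^ 2 / (b ^ p - a ^ p) ^ 2 := by
    positivity
  unfold ah2
  linarith

lemma ah2_mono (ha : 0 < a) (hab : a < b) : MonotoneOn (ah2 a b) (Set.Ioi 0) := by
  have hb : 0 < b := ha.trans hab
  intro p hp q hq hpq
  simp only [Set.mem_Ioi] at hp hq
  have hAp : (0:ℝ) < a ^ p := Real.rpow_pos_of_pos ha p
  have hAq : (0:ℝ) < a ^ q := Real.rpow_pos_of_pos ha q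
  have hBp : (0:ℝ) < b ^ p := Real.rpow_pos_of_pos hb p
  have hBq : (0:ℝ) < b ^ q := Real.rpow_pos_of_pos hb q
  have hvp : (0:ℝ) < b ^ p - a ^ p := sub_pos.2 (rlt ha hab hp)
  have hvq : (0:ℝ) < b ^ q - a ^ q := sub_pos.2 (rlt ha hab hq)
  -- inverse-square part
  have h1 : (q ^ 2)⁻¹ ≤ (p ^ 2)⁻¹ := by
    apply inv_anti₀ (by positivity)
    nlinarith
  -- the T part
  set K := Real.log b - Real.log a with hK
  have hT : ∀ r : ℝ, 0 < r →
      a ^ r * b ^ r * K ^ 2 / (b ^ r - a ^ r) ^ 2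
        = K ^ 2 / (b ^ r / a ^ r + (b ^ r / a ^ r)⁻¹ - 2) := by
    intro r hr
    have hAr : (0:ℝ) < a ^ r := Real.rpow_pos_of_pos ha r
    have hBr : (0:ℝ) < b ^ r := Real.rpow_pos_of_pos hb r
    have hvr : (0:ℝ) < b ^ r - a ^ r := sub_pos.2 (rlt ha hab hr)
    have hden : b ^ r / a ^ r + (b ^ r / a ^ r)⁻¹ - 2 = (b ^ r - a ^ r) ^ 2 / (a ^ r * b ^ r) := by
      field_simp
      ring
    rw [hden, div_div_eq_mul_div]
    rw [eq_div_iff (by positivity)]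
    field_simp
  have hxp1 : (1:ℝ) ≤ b ^ p / a ^ p := (one_le_div hAp).2 (rlt ha hab hp).le
  have hxpq : b ^ p / a ^ p ≤ b ^ q / a ^ q := by
    rw [← Real.div_rpow hb.le ha.le, ← Real.div_rpow hb.le ha.le]
    exact Real.rpow_le_rpow_of_exponent_le ((one_le_div ha).2 hab.le) hpq
  have hkey := add_inv_mono hxp1 hxpq
  have hdp : (0:ℝ) < b ^ p / a ^ p + (b ^ p / a ^ p)⁻¹ - 2 := by
    have : b ^ p / a ^ p + (b ^ p / a ^ p)⁻¹ - 2 = (b ^ p - a ^ p) ^ 2 / (a ^ p * b ^ p) := by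
      field_simp; ring
    rw [this]; positivity
  have hT2 : a ^ q * b ^ q * K ^ 2 / (b ^ q - a ^ q) ^ 2
      ≤ a ^ p * b ^ p * K ^ 2 / (b ^ p - a ^ p) ^ 2 := by
    rw [hT p hp, hT q hq]
    apply div_le_div_of_nonneg_left (by positivity) hdp
    linarith
  unfold ah2
  linarith

lemma contOn_ah1 (ha : 0 < a) (hab : a < b) : ContinuousOn (ah1 a b) (Set.Ioi 0) :=
  fun p hp => ((hasDerivAt_ah1 ha hab hp).differentiableAt.continuousAt).continuousWithinAt

lemma ah1_strictAnti (ha : 0 < a) (hab : a < b) : StrictAntiOn (ah1 a b) (Set.Ioi 0) := by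
  apply strictAntiOn_of_deriv_neg (convex_Ioi 0) (contOn_ah1 ha hab)
  intro p hp
  rw [interior_Ioi] at hp
  rw [(hasDerivAt_ah1 ha hab hp).deriv]
  exact ah2_neg ha hab hp

lemma ah1_convex (ha : 0 < a) (hab : a < b) : ConvexOn ℝ (Set.Ioi 0) (ah1 a b) := by
  apply MonotoneOn.convexOn_of_deriv (convex_Ioi 0) (contOn_ah1 ha hab)
  · rw [interior_Ioi]
    exact fun p hp => (hasDerivAt_ah1 ha hab hp).differentiableAt.differentiableWithinAt
  · rw [interior_Ioi]
    intro p hp q hq hpq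
    rw [(hasDerivAt_ah1 ha hab hp).deriv, (hasDerivAt_ah1 ha hab hq).deriv]
    exact ah2_mono ha hab hp hq hpq

/-- the function `p ↦ log (alzerMean p a b)`, in workable form. -/
def aF (a b p : ℝ) : ℝ := ah a b (p + 1) - ah a b p

lemma hasDerivAt_aF (ha : 0 < a) (hab : a < b) {p : ℝ} (hp : 0 < p) :
    HasDerivAt (aF a b) (ah1 a b (p + 1) - ah1 a b p) p := by
  have h1 : HasDerivAt (fun x : ℝ => ah a b (x + 1)) (ah1 a b (p + 1) * 1) p :=
    by have h := (hasDerivAt_ah ha hab (by linarith : (0:ℝ) < p + 1)).comp p ((hasDerivAt_id p).add_const 1); exact h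
  have h2 := h1.sub (hasDerivAt_ah ha hab hp)
  simp only [mul_one] at h2
  exact h2

lemma aF_strictAnti (ha : 0 < a) (hab : a < b) : StrictAntiOn (aF a b) (Set.Ioi 0) := by
  apply strictAntiOn_of_deriv_neg (convex_Ioi 0)
  · exact fun p hp =>
      ((hasDerivAt_aF ha hab hp).differentiableAt.continuousAt).continuousWithinAt
  · intro p hp
    rw [interior_Ioi, Set.mem_Ioi] at hp
    rw [(hasDerivAt_aF ha hab hp).deriv]
    have := ah1_strictAnti ha hab (Set.mem_Ioi.2 hp)
      (Set.mem_Ioi.2 (by linarith : (0:ℝ) < p + 1)) (by linarith)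
    linarith

lemma aF_convex (ha : 0 < a) (hab : a < b) : ConvexOn ℝ (Set.Ioi 0) (aF a b) := by
  apply MonotoneOn.convexOn_of_deriv (convex_Ioi 0)
  · exact fun p hp =>
      ((hasDerivAt_aF ha hab hp).differentiableAt.continuousAt).continuousWithinAt
  · rw [interior_Ioi]
    exact fun p hp => (hasDerivAt_aF ha hab hp).differentiableAt.differentiableWithinAt
  · rw [interior_Ioi]
    intro p hp q hq hpq
    simp only [Set.mem_Ioi] at hp hq
    rw [(hasDerivAt_aF ha hab hp).deriv, (hasDerivAt_aF ha hab hq).deriv]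
    have hcv := ah1_convex ha hab
    have hp1 : p + 1 ∈ Set.Ioi (0:ℝ) := Set.mem_Ioi.2 (by linarith)
    have hq1 : q + 1 ∈ Set.Ioi (0:ℝ) := Set.mem_Ioi.2 (by linarith)
    have hpm : p ∈ Set.Ioi (0:ℝ) := Set.mem_Ioi.2 hp
    have hqm : q ∈ Set.Ioi (0:ℝ) := Set.mem_Ioi.2 hq
    -- slope (p, p+1) ≤ slope (p, q+1)
    have s1 := hcv.secant_mono hpm hp1 hq1 (by linarith) (by linarith) (by linarith)
    -- slope (p, q+1) ≤ slope (q, q+1)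
    have s2 := hcv.secant_mono hq1 hpm hqm (by linarith) (by linarith) hpq
    have e1 : (ah1 a b p - ah1 a b (q + 1)) / (p - (q + 1))
        = (ah1 a b (q + 1) - ah1 a b p) / (q + 1 - p) := by
      rw [← neg_div_neg_eq, neg_sub, neg_sub]
    have e2 : (ah1 a b q - ah1 a b (q + 1)) / (q - (q + 1)) = ah1 a b (q + 1) - ah1 a b q := by
      rw [show q - (q + 1) = (-1 : ℝ) by ring]
      ring
    rw [e1, e2] at s2
    rw [show p + 1 - p = (1:ℝ) by ring, div_one] at s1
    linarith [le_trans s1 s2]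

lemma alzer_eq (ha : 0 < a) (hab : a < b) {p : ℝ} (hp : 0 < p) :
    alzerMean p a b = ((p + 1) * (b ^ (p + 1) - a ^ (p + 1))) / (p * (b ^ p - a ^ p)) := by
  unfold alzerMean
  have h1 : b ^ p - a ^ p ≠ 0 := (sub_pos.2 (rlt ha hab hp)).ne'
  have h2 : b ^ (p + 1) - a ^ (p + 1) ≠ 0 :=
    (sub_pos.2 (rlt ha hab (by linarith : (0:ℝ) < p + 1))).ne'
  have h1' : a ^ p - b ^ p ≠ 0 := sub_ne_zero.2 (rlt ha hab hp).ne
  field_simp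
  ring

lemma alzer_pos (ha : 0 < a) (hab : a < b) {p : ℝ} (hp : 0 < p) : 0 < alzerMean p a b := by
  rw [alzer_eq ha hab hp]
  have h1 : (0:ℝ) < b ^ p - a ^ p := sub_pos.2 (rlt ha hab hp)
  have h2 : (0:ℝ) < b ^ (p + 1) - a ^ (p + 1) :=
    sub_pos.2 (rlt ha hab (by linarith : (0:ℝ) < p + 1))
  have hp1 : (0:ℝ) < p + 1 := by linarith
  positivity

lemma log_alzer (ha : 0 < a) (hab : a < b) {p : ℝ} (hp : 0 < p) :
    Real.log (alzerMean p a b) = aF a b p := by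
  rw [alzer_eq ha hab hp]
  have hp1 : (0:ℝ) < p + 1 := by linarith
  have h1 : (0:ℝ) < b ^ p - a ^ p := sub_pos.2 (rlt ha hab hp)
  have h2 : (0:ℝ) < b ^ (p + 1) - a ^ (p + 1) := sub_pos.2 (rlt ha hab hp1)
  rw [Real.log_div (by positivity) (by positivity),
    Real.log_mul hp1.ne' h2.ne', Real.log_mul hp.ne' h1.ne']
  unfold aF ah
  ring

lemma alzer_exp (ha : 0 < a) (hab : a < b) {p : ℝ} (hp : 0 < p) :
    alzerMean p a b = Real.exp (aF a b p) := by
  rw [← log_alzer ha hab hp, Real.exp_log (alzer_pos ha hab hp)]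

end AlzerAux

theorem alzerMean_strictAnti_logConvex (a b : ℝ) (ha : 0 < a) (hab : a < b) :
    StrictAntiOn (fun p => alzerMean p a b) (Set.Ioi (0 : ℝ)) ∧
    ConvexOn ℝ (Set.Ioi (0 : ℝ)) (fun p => Real.log (alzerMean p a b)) := by
  constructor
  · intro x hx y hy hxy
    simp only
    rw [AlzerAux.alzer_exp ha hab hx, AlzerAux.alzer_exp ha hab hy]
    exact Real.exp_lt_exp.2 (AlzerAux.aF_strictAnti ha hab hx hy hxy)
  · have hF := AlzerAux.aF_convex ha hab
    refine ⟨convex_Ioi 0, ?_⟩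
    intro x hx y hy u v hu hv huv
    have hmem : u • x + v • y ∈ Set.Ioi (0:ℝ) := (convex_Ioi 0) hx hy hu hv huv
    have h := hF.2 hx hy hu hv huv
    simp only [smul_eq_mul] at *
    rw [AlzerAux.log_alzer ha hab hx, AlzerAux.log_alzer ha hab hy,
      AlzerAux.log_alzer ha hab hmem]
    exact h
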